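/- Let Y be a majorizing sublattice of an Archimedean vector lattice X. Then every 0 ≤ x in the relative uniform closure of Y in X is the supremum in X of an increasing sequence in Y₊; in particular Y is super order dense in its uniform closure. -/

import Mathlib

open Filter Set

section Defs

variable (X : Type*) [Lattice X] [AddCommGroup X] [Module ℝ X]

/-- Archimedean property for a vector lattice. -/
def VLArchimedean : Prop := ∀ x y : X, (∀ n : ℕ, n • x ≤ y) → x ≤ 0

variable {X}

/-- `Y` is a sublattice: a linear subspace closed under `⊔`. -/
def IsVLSublattice (Y : Set X) : Prop :=
  (0 : X) ∈ Y ∧ (∀ a ∈ Y, ∀ b ∈ Y, a + b ∈ Y) ∧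
    (∀ (c : ℝ), ∀ a ∈ Y, c • a ∈ Y) ∧ (∀ a ∈ Y, ∀ b ∈ Y, a ⊔ b ∈ Y)

/-- `Y` is majorizing in `X`. -/
def Majorizing (Y : Set X) : Prop := ∀ x : X, 0 ≤ x → ∃ y ∈ Y, x ≤ y

/-- Relative uniform convergence of a sequence with regulator `e`. -/
def RUTendsto (x : ℕ → X) (l e : X) : Prop :=
  0 ≤ e ∧ ∀ ε : ℝ, 0 < ε → ∃ N, ∀ n ≥ N, |x n - l| ≤ ε • e

/-- Relative uniform Cauchy sequence with regulator `e`. -/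
def RUCauchy (x : ℕ → X) (e : X) : Prop :=
  0 ≤ e ∧ ∀ ε : ℝ, 0 < ε → ∃ N, ∀ n ≥ N, ∀ m ≥ N, |x n - x m| ≤ ε • e

/-- Relative uniform convergence of a net with regulator `e`. -/
def RUTendstoNet {ι : Type*} [Preorder ι] (x : ι → X) (l e : X) : Prop :=
  0 ≤ e ∧ ∀ ε : ℝ, 0 < ε → ∃ α₀, ∀ α ≥ α₀, |x α - l| ≤ ε • e

/-- Relative uniform Cauchy net with regulator `e`. -/
def RUCauchyNet {ι : Type*} [Preorder ι] (x : ι → X) (e : X) : Prop :=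
  0 ≤ e ∧ ∀ ε : ℝ, 0 < ε → ∃ α₀, ∀ α ≥ α₀, ∀ β ≥ α₀, |x α - x β| ≤ ε • e

/-- Uniform adherence of a set: all relative uniform limits of sequences from `A`. -/
def uAdh (A : Set X) : Set X :=
  {l | ∃ x : ℕ → X, (∀ n, x n ∈ A) ∧ ∃ e, RUTendsto x l e}

/-- `A` is uniformly closed. -/
def RUClosed (A : Set X) : Prop := uAdh A ⊆ A

/-- Uniform closure: the least uniformly closed superset of `A`. -/
def uClosure (A : Set X) : Set X := ⋂₀ {B : Set X | A ⊆ B ∧ RUClosed B}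

variable (X)

/-- Relative uniform completeness (for sequences). -/
def RUComplete : Prop :=
  ∀ x : ℕ → X, (∃ e, RUCauchy x e) → ∃ l e, RUTendsto x l e

variable {X}

/-- Relative uniform completeness of a sublattice `Y` (regulators taken in `Y`). -/
def RUCompleteIn (Y : Set X) : Prop :=
  ∀ x : ℕ → X, (∀ n, x n ∈ Y) → (∃ e ∈ Y, RUCauchy x e) →
    ∃ l ∈ Y, ∃ e ∈ Y, RUTendsto x l e

/-- An (order) ideal of a vector lattice: a solid linear subspace. -/
def IsVLIdeal (I : Set X) : Prop :=
  (0 : X) ∈ I ∧ (∀ a ∈ I, ∀ b ∈ I, a + b ∈ I) ∧ (∀ (c : ℝ), ∀ a ∈ I, c • a ∈ I) ∧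
    ∀ x : X, ∀ y ∈ I, |x| ≤ |y| → x ∈ I

/-- The ideal generated by a set. -/
def idealGen (Y : Set X) : Set X := ⋂₀ {I : Set X | Y ⊆ I ∧ IsVLIdeal I}

/-- `B` is a projection band: an ideal along which the space decomposes. -/
def IsProjectionBand (B : Set X) : Prop :=
  IsVLIdeal B ∧ ∀ x : X, ∃ b ∈ B, ∃ d : X, (∀ y ∈ B, |d| ⊓ |y| = 0) ∧ x = b + d

end Defs

private lemma smul_le_smul_scalar {X : Type*} [Lattice X] [AddCommGroup X] [Module ℝ X]
    [CovariantClass X X (· + ·) (· ≤ ·)] [PosSMulMono ℝ X]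
    {c d : ℝ} {f : X} (h : c ≤ d) (hf : 0 ≤ f) : c • f ≤ d • f := by
  have h1 : (0 : X) ≤ (d - c) • f := smul_nonneg (by linarith) hf
  calc c • f ≤ c • f + (d - c) • f := le_add_of_nonneg_right h1
    _ = d • f := by rw [← add_smul]; ring_nf

/-- From a sequence of elements of `Y` below `x` with the least-upper-bound property,
build a monotone sequence in `Y` with supremum `x`. -/
private lemma seq_to_mono {X : Type*} [Lattice X] {Y : Set X}
    (hsup : ∀ a ∈ Y, ∀ b ∈ Y, a ⊔ b ∈ Y) (x : X) (v : ℕ → X)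
    (hvY : ∀ i, v i ∈ Y) (hvle : ∀ i, v i ≤ x)
    (hub : ∀ u, (∀ i, v i ≤ u) → x ≤ u) :
    ∃ y : ℕ → X, (∀ n, y n ∈ Y) ∧ Monotone y ∧ IsLUB (Set.range y) x := by
  let y : ℕ → X := fun n => Nat.rec (v 0) (fun n z => z ⊔ v (n + 1)) n
  have hyY : ∀ n, y n ∈ Y := by
    intro n
    induction n with
    | zero => exact hvY 0
    | succ n ih => exact hsup _ ih _ (hvY (n + 1))
  have hmono : Monotone y := monotone_nat_of_le_succ fun n => le_sup_left
  have hyle : ∀ n, y n ≤ x := by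
    intro n
    induction n with
    | zero => exact hvle 0
    | succ n ih => exact sup_le ih (hvle (n + 1))
  have hvy : ∀ i, v i ≤ y i := by
    intro i
    cases i with
    | zero => exact le_rfl
    | succ i => exact le_sup_right
  refine ⟨y, hyY, hmono, ⟨?_, ?_⟩⟩
  · rintro z ⟨n, rfl⟩; exact hyle n
  · intro u hu
    exact hub u fun i => (hvy i).trans (hu ⟨i, rfl⟩)

private lemma mem_B_of_uClosure {X : Type*} [Lattice X] [AddCommGroup X] [Module ℝ X]
    [CovariantClass X X (· + ·) (· ≤ ·)] [PosSMulMono ℝ X]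
    (harch : VLArchimedean X)
    {Y : Set X} (hY : IsVLSublattice Y) (hmaj : Majorizing Y)
    {x : X} (hx : x ∈ uClosure Y) :
    ∃ y : ℕ → X, (∀ n, y n ∈ Y) ∧ Monotone y ∧ IsLUB (Set.range y) x := by
  set B : Set X :=
    {z | ∃ y : ℕ → X, (∀ n, y n ∈ Y) ∧ Monotone y ∧ IsLUB (Set.range y) z} with hB
  have hYB : Y ⊆ B := by
    intro a ha
    refine ⟨fun _ => a, fun _ => ha, monotone_const, ?_⟩
    rw [Set.range_const]
    exact isLUB_singleton
  have hclosed : RUClosed B := by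
    rintro l ⟨xs, hxs, e, he0, hconv⟩
    obtain ⟨f, hfY, hef⟩ := hmaj e he0
    have hf0 : (0 : X) ≤ f := he0.trans hef
    have key : ∀ k : ℕ, ∃ a : X, a ∈ B ∧ |a - l| ≤ ((1 / 2 : ℝ) ^ k) • e := by
      intro k
      obtain ⟨N, hN⟩ := hconv ((1 / 2 : ℝ) ^ k) (by positivity)
      exact ⟨xs N, hxs N, hN N le_rfl⟩
    choose a hPa hal using key
    choose y hyY hymono hylub using hPa
    set w : ℕ → ℕ → X := fun k m => y k m + (-((1 / 2 : ℝ) ^ k)) • f with hw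
    have hwY : ∀ k m, w k m ∈ Y :=
      fun k m => hY.2.1 _ (hyY k m) _ (hY.2.2.1 _ f hfY)
    have hcke : ∀ k, ((1 / 2 : ℝ) ^ k) • e ≤ ((1 / 2 : ℝ) ^ k) • f :=
      fun k => smul_le_smul_of_nonneg_left hef (by positivity)
    have hwle : ∀ k m, w k m ≤ l := by
      intro k m
      have h1 : y k m ≤ a k := (hylub k).1 ⟨m, rfl⟩
      have h2 : a k - l ≤ ((1 / 2 : ℝ) ^ k) • f :=
        le_trans (le_trans (le_abs_self _) (hal k)) (hcke k)
      have h3 : a k ≤ l + ((1 / 2 : ℝ) ^ k) • f := by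
        have := sub_le_iff_le_add.mp h2
        rwa [add_comm] at this
      calc w k m = y k m - ((1 / 2 : ℝ) ^ k) • f := by rw [hw]; simp [neg_smul, sub_eq_add_neg]
        _ ≤ a k - ((1 / 2 : ℝ) ^ k) • f := by exact sub_le_sub_right h1 _
        _ ≤ l := sub_le_iff_le_add.mpr h3
    have hub : ∀ u, (∀ k m, w k m ≤ u) → l ≤ u := by
      intro u hu
      have hk : ∀ k : ℕ, l - u ≤ ((2 : ℝ) * (1 / 2 : ℝ) ^ k) • f := by
        intro k
        have hupb : a k ≤ u + ((1 / 2 : ℝ) ^ k) • f := by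
          refine (hylub k).2 ?_
          rintro z ⟨m, rfl⟩
          have := hu k m
          rw [hw] at this
          simp only [neg_smul, ← sub_eq_add_neg] at this
          exact sub_le_iff_le_add.mp this
        have h2 : l - a k ≤ ((1 / 2 : ℝ) ^ k) • f := by
          have := (hal k)
          rw [abs_sub_comm] at this
          exact le_trans (le_trans (le_abs_self _) this) (hcke k)
        have : l ≤ u + ((1 / 2 : ℝ) ^ k) • f + ((1 / 2 : ℝ) ^ k) • f := by
          have h3 : l ≤ a k + ((1 / 2 : ℝ) ^ k) • f := by
            have := sub_le_iff_le_add.mp h2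
            rwa [add_comm] at this
          exact h3.trans (add_le_add_left hupb _)
        have h4 : l - u ≤ ((1 / 2 : ℝ) ^ k) • f + ((1 / 2 : ℝ) ^ k) • f := by
          rw [sub_le_iff_le_add]
          calc l ≤ u + ((1 / 2 : ℝ) ^ k) • f + ((1 / 2 : ℝ) ^ k) • f := this
            _ = ((1 / 2 : ℝ) ^ k) • f + ((1 / 2 : ℝ) ^ k) • f + u := by abel
        calc l - u ≤ ((1 / 2 : ℝ) ^ k) • f + ((1 / 2 : ℝ) ^ k) • f := h4
          _ = ((2 : ℝ) * (1 / 2 : ℝ) ^ k) • f := by rw [two_mul, add_smul]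
      have harchp : ∀ n : ℕ, n • (l - u) ≤ f := by
        intro n
        have h5 : l - u ≤ ((1 / 2 : ℝ) ^ n) • f := by
          have := hk (n + 1)
          have heq : (2 : ℝ) * (1 / 2 : ℝ) ^ (n + 1) = (1 / 2 : ℝ) ^ n := by
            rw [pow_succ]; ring
          rwa [heq] at this
        have h6 : (n : ℝ) • (l - u) ≤ (n : ℝ) • (((1 / 2 : ℝ) ^ n) • f) :=
          smul_le_smul_of_nonneg_left h5 (Nat.cast_nonneg n)
        have h7 : ((n : ℝ) * (1 / 2 : ℝ) ^ n) ≤ 1 := by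
          have hn2 : (n : ℝ) ≤ 2 ^ n := by
            exact_mod_cast (Nat.lt_two_pow_self (n := n)).le
          have heq2 : (n : ℝ) * (1 / 2 : ℝ) ^ n = n / 2 ^ n := by
            rw [div_pow, one_pow]; ring
          rw [heq2]
          exact (div_le_one (by positivity)).mpr hn2
        calc n • (l - u) = (n : ℝ) • (l - u) := (Nat.cast_smul_eq_nsmul ℝ n _).symm
          _ ≤ ((n : ℝ) * (1 / 2 : ℝ) ^ n) • f := by rw [← smul_smul] at *; exact h6
          _ ≤ (1 : ℝ) • f := smul_le_smul_scalar h7 hf0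
          _ = f := one_smul ℝ f
      exact sub_nonpos.mp (harch (l - u) f harchp)
    refine seq_to_mono hY.2.2.2 l (fun i => w i.unpair.1 i.unpair.2)
      (fun i => hwY _ _) (fun i => hwle _ _) ?_
    intro u h
    refine hub u fun k m => ?_
    simpa using h (Nat.pair k m)
  exact Set.mem_sInter.mp hx B ⟨hYB, hclosed⟩

theorem closure_of_majorizing_sublattice_increasing_sup
    {X : Type*} [Lattice X] [AddCommGroup X] [Module ℝ X]
    [CovariantClass X X (· + ·) (· ≤ ·)] [PosSMulMono ℝ X]
    (harch : VLArchimedean X)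
    {Y : Set X} (hY : IsVLSublattice Y) (hmaj : Majorizing Y)
    {x : X} (hx0 : 0 ≤ x) (hx : x ∈ uClosure Y) :
    ∃ y : ℕ → X, (∀ n, y n ∈ Y) ∧ (∀ n, 0 ≤ y n) ∧ Monotone y ∧
      IsLUB (Set.range y) x := by
  obtain ⟨y, hyY, hmono, hlub⟩ := mem_B_of_uClosure harch hY hmaj hx
  refine ⟨fun n => y n ⊔ 0, fun n => hY.2.2.2 _ (hyY n) _ hY.1, fun n => le_sup_right,
    fun m n hmn => sup_le_sup_right (hmono hmn) 0, ⟨?_, ?_⟩⟩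
  · rintro z ⟨n, rfl⟩
    exact sup_le (hlub.1 ⟨n, rfl⟩) hx0
  · intro u hu
    refine hlub.2 ?_
    rintro z ⟨n, rfl⟩
    exact le_trans le_sup_left (hu ⟨n, rfl⟩)
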